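/- With T = 𝔽₂[a_σ, a_λ, w][u_σ^{±1}, u_λ^{±1}]/(a_σ²) and e_u = u_σ u_λ w, e_λ = u_λ w², e_a = u_σ u_λ w³ + u_σ a_λ w, e_ρ = u_σ u_λ w⁴ + a_σ u_λ w³ + u_σ a_λ w² + a_σ a_λ w, one has e_λ² = u_σ⁻¹ u_λ·e_ρ + a_σ u_σ⁻² u_λ·e_a + a_λ·e_λ. -/

import Mathlib

noncomputable section

namespace StmtT

/-- The Laurent/polynomial ring `𝔽₂[a_σ, a_λ, w][u_σ^{±1}, u_λ^{±1}]`, realized as the group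
algebra of `ℤ × ℤ` (the exponents of `u_σ` and `u_λ`) over `𝔽₂[a_σ, a_λ, w]`. -/
abbrev L : Type := AddMonoidAlgebra (MvPolynomial (Fin 3) (ZMod 2)) (ℤ × ℤ)

def asL : L := AddMonoidAlgebra.single (0, 0) (MvPolynomial.X 0)

/-- `T = 𝔽₂[a_σ, a_λ, w][u_σ^{±1}, u_λ^{±1}]/(a_σ²)`. -/
abbrev T : Type := L ⧸ Ideal.span ({asL ^ 2} : Set L)

def q : L →+* T := Ideal.Quotient.mk _

/-- `a_σ` -/
def as : T := q asL
/-- `a_λ` -/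
def al : T := q (AddMonoidAlgebra.single (0, 0) (MvPolynomial.X 1))
/-- `w` -/
def w : T := q (AddMonoidAlgebra.single (0, 0) (MvPolynomial.X 2))
/-- `u_σ` -/
def us : T := q (AddMonoidAlgebra.single (1, 0) 1)
/-- `u_σ⁻¹` -/
def usInv : T := q (AddMonoidAlgebra.single (-1, 0) 1)
/-- `u_λ` -/
def ul : T := q (AddMonoidAlgebra.single (0, 1) 1)
/-- `u_λ⁻¹` -/
def ulInv : T := q (AddMonoidAlgebra.single (0, -1) 1)

/-- `e_u = u_σ u_λ w` -/
def eu : T := us * ul * w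
/-- `e_λ = u_λ w²` -/
def el : T := ul * w ^ 2
/-- `e_a = u_σ u_λ w³ + u_σ a_λ w` -/
def ea : T := us * ul * w ^ 3 + us * al * w
/-- `e_ρ = u_σ u_λ w⁴ + a_σ u_λ w³ + u_σ a_λ w² + a_σ a_λ w` -/
def er : T := us * ul * w ^ 4 + as * ul * w ^ 3 + us * al * w ^ 2 + as * al * w


end StmtT
/-- In `T`: `e_λ² = u_σ⁻¹ u_λ·e_ρ + a_σ u_σ⁻² u_λ·e_a + a_λ·e_λ`. -/
theorem stmt8 : StmtT.el ^ 2 = StmtT.usInv * StmtT.ul * StmtT.er +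
    StmtT.as * StmtT.usInv ^ 2 * StmtT.ul * StmtT.ea + StmtT.al * StmtT.el := by
  have h1 : StmtT.usInv * StmtT.us = 1 := by
    unfold StmtT.usInv StmtT.us
    rw [← map_mul, AddMonoidAlgebra.single_mul_single]
    norm_num
    rw [show ((0:ℤ), (0:ℤ)) = (0 : ℤ × ℤ) from rfl, ← AddMonoidAlgebra.one_def, map_one]
  have htwo : (2 : StmtT.T) = 0 := by
    have hL : (2 : StmtT.L) = 0 := by
      rw [show (2 : StmtT.L) = 1 + 1 by norm_num, AddMonoidAlgebra.one_def,
        ← AddMonoidAlgebra.single_add]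
      have : (1 : MvPolynomial (Fin 3) (ZMod 2)) + 1 = 0 := by
        rw [← map_one (MvPolynomial.C (σ := Fin 3) (R := ZMod 2)), ← map_add]
        norm_num
        decide
      rw [this, AddMonoidAlgebra.single_zero]
    calc (2 : StmtT.T) = StmtT.q 2 := by rw [map_ofNat]
      _ = 0 := by rw [hL, map_zero]
  unfold StmtT.el StmtT.er StmtT.ea
  linear_combination (-(StmtT.ul ^ 2 * StmtT.w ^ 4 + StmtT.al * StmtT.ul * StmtT.w ^ 2 +
      StmtT.as * StmtT.usInv * StmtT.ul ^ 2 * StmtT.w ^ 3 +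
      StmtT.as * StmtT.al * StmtT.usInv * StmtT.ul * StmtT.w)) * h1 +
    (-(StmtT.al * StmtT.ul * StmtT.w ^ 2 + StmtT.as * StmtT.usInv * StmtT.ul ^ 2 * StmtT.w ^ 3 +
      StmtT.as * StmtT.al * StmtT.usInv * StmtT.ul * StmtT.w)) * htwo
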